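/- For every integer n ≥ 3 and every real t ≠ 0, the exponential generating function of the moments of distance equals the moment-generating function: ∑_{k=0}^∞ I(n,k) · t^k / k! = (2n/(π(4+t²))) · ( 2(e^{tπ/n} − 1)/t + tan(π/n) · (e^{tπ/2} − e^{tπ/n}) ), and in particular this series converges. -/

import Mathlib

open MeasureTheory

/-- The `k`-th moment of distance on the homogeneous lens space `L(n;1)`,
expressed as an explicit integral over a fundamental domain in join coordinates. -/
noncomputable def momentI (n k : ℕ) : ℝ :=
  ((n : ℝ) ^ 2 / (2 * Real.pi ^ 2)) *
    ∫ θ₂ in (-(Real.pi / n))..(Real.pi / n),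
      ∫ θ₁ in (-(Real.pi / n))..(Real.pi / n),
        ∫ η in (0 : ℝ)..(Real.pi / 2),
          (Real.arccos (Real.cos θ₁ * Real.cos η)) ^ k * Real.cos η * Real.sin η

open Real intervalIntegral Set

lemma subst_eta (k : ℕ) {θ : ℝ} (h0 : θ ≠ 0) (hθ : |θ| < π/2) :
    (∫ η in (0:ℝ)..(π/2), (Real.arccos (Real.cos θ * Real.cos η)) ^ k * Real.cos η * Real.sin η)
      = (1 / Real.cos θ ^ 2) * ∫ r in |θ|..(π/2), r ^ k * Real.sin r * Real.cos r := by
  obtain ⟨hl, hr⟩ := abs_lt.mp hθ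
  have hc0 : 0 < Real.cos θ := Real.cos_pos_of_mem_Ioo ⟨hl, hr⟩
  have hc1 : Real.cos θ < 1 := by
    rcases lt_or_eq_of_le (Real.cos_le_one θ) with h | h
    · exact h
    · exact absurd ((Real.cos_eq_one_iff_of_lt_of_lt
        (by nlinarith [Real.pi_pos]) (by nlinarith [Real.pi_pos])).mp h) h0
  set c := Real.cos θ with hc
  -- the inner function and derivative
  set f : ℝ → ℝ := fun η => Real.arccos (c * Real.cos η) with hf
  set f' : ℝ → ℝ := fun η => -(1 / Real.sqrt (1 - (c * Real.cos η)^2)) * (c * (-Real.sin η)) with hf'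
  have harg : ∀ η : ℝ, -1 < c * Real.cos η ∧ c * Real.cos η < 1 := by
    intro η
    constructor
    · nlinarith [Real.neg_one_le_cos η, Real.cos_le_one η]
    · nlinarith [Real.neg_one_le_cos η, Real.cos_le_one η]
  have hderiv : ∀ η ∈ uIcc (0:ℝ) (π/2), HasDerivAt f (f' η) η := by
    intro η _
    have h1 : HasDerivAt (fun η : ℝ => c * Real.cos η) (c * (-Real.sin η)) η :=
      (Real.hasDerivAt_cos η).const_mul c
    have h2 := (Real.hasDerivAt_arccos (harg η).1.ne' (harg η).2.ne).comp η h1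
    exact h2
  have hsq : ∀ η : ℝ, 0 < 1 - (c * Real.cos η)^2 := by
    intro η
    nlinarith [(harg η).1, (harg η).2]
  have hf'cont : ContinuousOn f' (uIcc (0:ℝ) (π/2)) := by
    apply Continuous.continuousOn
    apply Continuous.mul
    · apply Continuous.neg
      apply Continuous.div continuous_const
      · exact (Real.continuous_sqrt.comp (by continuity))
      · intro η
        exact (Real.sqrt_pos.mpr (hsq η)).ne'
    · continuity
  set g : ℝ → ℝ := fun r => (r ^ k * Real.sin r * Real.cos r) / c ^ 2 with hg
  have key : (∫ η in (0:ℝ)..(π/2), f' η • (g ∘ f) η) = ∫ r in (f 0)..(f (π/2)), g r :=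
    intervalIntegral.integral_comp_smul_deriv hderiv hf'cont (by fun_prop)
  have hf0 : f 0 = |θ| := by
    simp only [hf, Real.cos_zero, mul_one, hc]
    rw [← Real.cos_abs, Real.arccos_cos (abs_nonneg θ) (by nlinarith [Real.pi_pos])]
  have hfpi : f (π/2) = π/2 := by
    simp only [hf, Real.cos_pi_div_two, mul_zero, Real.arccos_zero]
  -- identify integrands
  have heq : ∀ η ∈ uIcc (0:ℝ) (π/2),
      f' η • (g ∘ f) η = (Real.arccos (c * Real.cos η)) ^ k * Real.cos η * Real.sin η := by
    intro η hη
    have h01 : (0:ℝ) ≤ π/2 := by positivity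
    rw [uIcc_of_le h01] at hη
    have hsin : 0 ≤ Real.sin η := Real.sin_nonneg_of_nonneg_of_le_pi hη.1
      (le_trans hη.2 (by linarith [Real.pi_pos]))
    have hcosf : Real.cos (f η) = c * Real.cos η :=
      Real.cos_arccos (harg η).1.le (harg η).2.le
    have hsinf : Real.sin (f η) = Real.sqrt (1 - (c * Real.cos η)^2) := Real.sin_arccos _
    have hsqrt : 0 < Real.sqrt (1 - (c * Real.cos η)^2) := Real.sqrt_pos.mpr (hsq η)
    simp only [smul_eq_mul, Function.comp, hg, hf', hf]
    rw [hsinf, hcosf] at *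
    field_simp [hf]
    have hs2 : Real.sqrt (1 - c ^ 2 * Real.cos η ^ 2) ≠ 0 := by
      rw [show c ^ 2 * Real.cos η ^ 2 = (c * Real.cos η) ^ 2 by ring]; exact hsqrt.ne'
    rw [div_eq_iff hs2]
    ring
  rw [intervalIntegral.integral_congr heq] at key
  rw [key, hf0, hfpi, hg]
  rw [intervalIntegral.integral_div]
  ring

-- FTC for upper-to-lower limit
lemma hasDerivAt_G (k : ℕ) (a : ℝ) :
    HasDerivAt (fun a : ℝ => ∫ r in a..(π/2), r ^ k * Real.sin r * Real.cos r)
      (-(a ^ k * Real.sin a * Real.cos a)) a := by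
  have hcont : Continuous fun r : ℝ => r ^ k * Real.sin r * Real.cos r := by continuity
  have h1 : HasDerivAt (fun u : ℝ => ∫ r in (π/2)..u, r ^ k * Real.sin r * Real.cos r)
      (a ^ k * Real.sin a * Real.cos a) a :=
    intervalIntegral.integral_hasDerivAt_right (hcont.intervalIntegrable _ _)
      (hcont.stronglyMeasurableAtFilter _ _) hcont.continuousAt
  have : HasDerivAt (fun u => -∫ r in (π/2)..u, r ^ k * Real.sin r * Real.cos r)
      (-(a ^ k * Real.sin a * Real.cos a)) a := h1.neg
  convert this using 1
  funext u
  rw [intervalIntegral.integral_symm]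

lemma continuous_G (k : ℕ) :
    Continuous fun a : ℝ => ∫ r in a..(π/2), r ^ k * Real.sin r * Real.cos r :=
  continuous_iff_continuousAt.mpr fun a => (hasDerivAt_G k a).continuousAt

lemma momentI_eq (n k : ℕ) (hn : 3 ≤ n) :
    momentI n k = (2 * n / π) *
      ((∫ θ in (0:ℝ)..(π/n), θ ^ k * Real.sin θ ^ 2)
        + Real.tan (π/n) * ∫ r in (π/n)..(π/2), r ^ k * Real.sin r * Real.cos r) := by
  have hπ := Real.pi_pos
  have hn' : (3:ℝ) ≤ n := by exact_mod_cast hn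
  have hnpos : (0:ℝ) < n := by linarith
  set φ : ℝ := π / n with hφdef
  have hφpos : 0 < φ := by positivity
  have hφlt : φ < π / 2 := by
    rw [hφdef, div_lt_div_iff₀ hnpos (by norm_num)]
    nlinarith
  set G : ℝ → ℝ := fun a => ∫ r in a..(π/2), r ^ k * Real.sin r * Real.cos r with hG
  set H : ℝ → ℝ := fun θ => (1 / Real.cos θ ^ 2) * G |θ| with hH
  -- step 2 pointwise identification
  have hpt : ∀ θ ∈ uIcc (-φ) φ,
      (∫ η in (0:ℝ)..(π/2), (Real.arccos (Real.cos θ * Real.cos η)) ^ k * Real.cos η * Real.sin η)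
        = H θ := by
    intro θ hθ
    rw [uIcc_of_le (by linarith)] at hθ
    have habs : |θ| < π/2 := by
      rw [abs_lt]; exact ⟨by linarith [hθ.1], by linarith [hθ.2]⟩
    by_cases h0 : θ = 0
    · subst h0
      simp only [hH, Real.cos_zero, one_pow, abs_zero, one_mul, div_one]
      show _ = ∫ r in (0:ℝ)..(π/2), r ^ k * Real.sin r * Real.cos r
      apply intervalIntegral.integral_congr
      intro η hη
      rw [uIcc_of_le (by positivity : (0:ℝ) ≤ π/2)] at hη
      simp only []
      rw [Real.arccos_cos hη.1 (by linarith [hη.2])]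
      ring
    · exact subst_eta k h0 habs
  -- step 1: outer integral of constant + congr inner
  have step1 : momentI n k = (n / π) * ∫ θ in (-φ)..φ, H θ := by
    rw [momentI]
    rw [intervalIntegral.integral_congr hpt]
    rw [intervalIntegral.integral_const]
    rw [smul_eq_mul]
    have : φ - -φ = 2 * φ := by ring
    rw [this, hφdef]
    field_simp
  -- integrability of H on subintervals of (-π/2, π/2)
  have hHint : ∀ a b : ℝ, -(π/2) < a → a ≤ b → b < π/2 → IntervalIntegrable H volume a b := by
    intro a b ha hab hb
    apply ContinuousOn.intervalIntegrable
    rw [uIcc_of_le hab]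
    apply ContinuousOn.mul
    · apply ContinuousOn.div continuousOn_const
      · fun_prop
      · intro x hx
        have : 0 < Real.cos x := Real.cos_pos_of_mem_Ioo ⟨by linarith [hx.1], by linarith [hx.2]⟩
        positivity
    · exact ((continuous_G k).comp continuous_abs).continuousOn
  -- evenness: ∫_{-φ}^{φ} H = 2 ∫_0^φ H
  have heven : (∫ θ in (-φ)..φ, H θ) = 2 * ∫ θ in (0:ℝ)..φ, H θ := by
    have h1 : (∫ θ in (-φ)..(0:ℝ), H θ) + (∫ θ in (0:ℝ)..φ, H θ) = ∫ θ in (-φ)..φ, H θ :=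
      intervalIntegral.integral_add_adjacent_intervals
        (hHint (-φ) 0 (by linarith) (by linarith) (by linarith))
        (hHint 0 φ (by linarith) (by linarith) hφlt)
    have h2 : (∫ θ in (-φ)..(0:ℝ), H θ) = ∫ θ in (0:ℝ)..φ, H θ := by
      have h3 : (∫ θ in (0:ℝ)..φ, H (-θ)) = ∫ θ in (-φ)..(0:ℝ), H θ := by
        simpa using intervalIntegral.integral_comp_neg (a := (0:ℝ)) (b := φ) (f := H)
      rw [← h3]
      apply intervalIntegral.integral_congr
      intro x _
      simp only [hH, Real.cos_neg, abs_neg]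
    linarith
  -- replace |θ| by θ on [0, φ]
  have habs0 : (∫ θ in (0:ℝ)..φ, H θ) = ∫ θ in (0:ℝ)..φ, G θ * (1 / Real.cos θ ^ 2) := by
    apply intervalIntegral.integral_congr
    intro x hx
    rw [uIcc_of_le hφpos.le] at hx
    simp only [hH, abs_of_nonneg hx.1]
    ring
  -- integration by parts
  have hibp : (∫ θ in (0:ℝ)..φ, G θ * (1 / Real.cos θ ^ 2))
      = G φ * Real.tan φ + ∫ θ in (0:ℝ)..φ, θ ^ k * Real.sin θ ^ 2 := by
    have hcos : ∀ x ∈ uIcc (0:ℝ) φ, 0 < Real.cos x := by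
      intro x hx
      rw [uIcc_of_le hφpos.le] at hx
      exact Real.cos_pos_of_mem_Ioo ⟨by linarith [hx.1], by linarith [hx.2]⟩
    have hu : ∀ x ∈ uIcc (0:ℝ) φ, HasDerivAt G (-(x ^ k * Real.sin x * Real.cos x)) x :=
      fun x _ => hasDerivAt_G k x
    have hv : ∀ x ∈ uIcc (0:ℝ) φ, HasDerivAt Real.tan (1 / Real.cos x ^ 2) x :=
      fun x hx => Real.hasDerivAt_tan (hcos x hx).ne'
    have hu' : IntervalIntegrable (fun x => -(x ^ k * Real.sin x * Real.cos x)) volume 0 φ := by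
      apply Continuous.intervalIntegrable; fun_prop
    have hv' : IntervalIntegrable (fun x => 1 / Real.cos x ^ 2) volume 0 φ := by
      apply ContinuousOn.intervalIntegrable
      apply ContinuousOn.div continuousOn_const (by fun_prop)
      intro x hx
      exact (pow_pos (hcos x hx) 2).ne'
    have := intervalIntegral.integral_mul_deriv_eq_deriv_mul
      (u := G) (v := Real.tan) (u' := fun x => -(x ^ k * Real.sin x * Real.cos x))
      (v' := fun x => 1 / Real.cos x ^ 2) hu hv hu' hv'
    rw [this, Real.tan_zero]
    have hlast : (∫ x in (0:ℝ)..φ, -(x ^ k * Real.sin x * Real.cos x) * Real.tan x)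
        = -∫ θ in (0:ℝ)..φ, θ ^ k * Real.sin θ ^ 2 := by
      rw [← intervalIntegral.integral_neg]
      apply intervalIntegral.integral_congr
      intro x hx
      simp only []
      rw [Real.tan_eq_sin_div_cos]
      field_simp [(hcos x hx).ne']
    rw [hlast]
    ring
  rw [step1, heven, habs0, hibp, hG]
  ring
lemma hasSum_moment_integral (t : ℝ) {a b : ℝ} (hab : a ∈ Set.Icc (-(π/2)) (π/2))
    (hbb : b ∈ Set.Icc (-(π/2)) (π/2))
    {w : ℝ → ℝ} (hw : Continuous w) (hw1 : ∀ r, |w r| ≤ 1) :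
    HasSum (fun k : ℕ => (∫ r in a..b, r ^ k * w r) * t ^ k / (k.factorial : ℝ))
      (∫ r in a..b, Real.exp (t * r) * w r) := by
  set f : ℕ → C(ℝ, ℝ) := fun k =>
    ⟨fun r => (t ^ k / (k.factorial : ℝ)) * (r ^ k * w r), by fun_prop⟩ with hfdef
  have hπ := Real.pi_pos
  have hKsub : Set.uIcc a b ⊆ Set.Icc (-(π/2)) (π/2) := Set.uIcc_subset_Icc hab hbb
  have hnorm : ∀ k : ℕ, ‖(f k).restrict (⟨Set.uIcc a b, isCompact_uIcc⟩ : TopologicalSpace.Compacts ℝ)‖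
      ≤ (|t| * (π/2)) ^ k / (k.factorial : ℝ) := by
    intro k
    rw [ContinuousMap.norm_le _ (by positivity)]
    rintro ⟨x, hx⟩
    have hx' := hKsub hx
    have hxabs : |x| ≤ π/2 := abs_le.mpr ⟨hx'.1, hx'.2⟩
    simp only [ContinuousMap.restrict_apply, hfdef, ContinuousMap.coe_mk]
    rw [Real.norm_eq_abs, abs_mul, abs_mul, abs_div, abs_pow, abs_pow, Nat.abs_cast, mul_pow]
    calc |t| ^ k / (k.factorial : ℝ) * (|x| ^ k * |w x|)
        ≤ |t| ^ k / (k.factorial : ℝ) * ((π/2) ^ k * 1) := by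
          gcongr <;> first
            | exact hw1 x
            | exact hxabs
            | exact abs_nonneg x
            | positivity
      _ = |t| ^ k * (π/2) ^ k / (k.factorial : ℝ) := by ring
  have hsummable : Summable fun k : ℕ =>
      ‖(f k).restrict (⟨Set.uIcc a b, isCompact_uIcc⟩ : TopologicalSpace.Compacts ℝ)‖ :=
    Summable.of_nonneg_of_le (fun k => norm_nonneg _) hnorm
      (Real.summable_pow_div_factorial (|t| * (π/2)))
  have H := intervalIntegral.hasSum_intervalIntegral_of_summable_norm (a := a) (b := b) hsummable
  have h1 : (fun k : ℕ => ∫ x in a..b, (f k) x)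
      = fun k : ℕ => (∫ r in a..b, r ^ k * w r) * t ^ k / (k.factorial : ℝ) := by
    funext k
    simp only [hfdef, ContinuousMap.coe_mk]
    rw [intervalIntegral.integral_const_mul]
    ring
  have h2 : (∫ x in a..b, ∑' k : ℕ, (f k) x) = ∫ r in a..b, Real.exp (t * r) * w r := by
    apply intervalIntegral.integral_congr
    intro x _
    simp only [hfdef, ContinuousMap.coe_mk]
    have : ∀ k : ℕ, t ^ k / (k.factorial : ℝ) * (x ^ k * w x)
        = (t * x) ^ k / (k.factorial : ℝ) * w x := by
      intro k; rw [mul_pow]; ring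
    rw [tsum_congr this, tsum_mul_right]
    congr 1
    rw [Real.exp_eq_exp_ℝ, NormedSpace.exp_eq_tsum_div]
  rw [h1, h2] at H
  exact H

-- generic derivative of r ↦ exp (t r)
lemma hasDerivAt_exp_mul (t r : ℝ) : HasDerivAt (fun r : ℝ => Real.exp (t * r)) (t * Real.exp (t * r)) r := by
  have h1 : HasDerivAt (fun r : ℝ => t * r) t r := by simpa using (hasDerivAt_id r).const_mul t
  convert h1.exp using 1; ring

lemma integral_exp_sin_sq (t : ℝ) (ht : t ≠ 0) (a b : ℝ) :
    (∫ r in a..b, Real.exp (t * r) * Real.sin r ^ 2)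
      = ((Real.exp (t * b) / (2*t) - Real.exp (t * b) * (t * Real.cos (2*b) + 2 * Real.sin (2*b)) / (2*(t^2+4)))
        - (Real.exp (t * a) / (2*t) - Real.exp (t * a) * (t * Real.cos (2*a) + 2 * Real.sin (2*a)) / (2*(t^2+4)))) := by
  set F : ℝ → ℝ := fun r => Real.exp (t * r) / (2*t)
      - Real.exp (t * r) * (t * Real.cos (2*r) + 2 * Real.sin (2*r)) / (2*(t^2+4)) with hF
  have hd : ∀ r ∈ Set.uIcc a b, HasDerivAt F (Real.exp (t * r) * Real.sin r ^ 2) r := by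
    intro r _
    have he := hasDerivAt_exp_mul t r
    have hc : HasDerivAt (fun r : ℝ => Real.cos (2*r)) (-Real.sin (2*r) * 2) r := by
      simpa using ((hasDerivAt_id' r).const_mul 2).cos
    have hs : HasDerivAt (fun r : ℝ => Real.sin (2*r)) (Real.cos (2*r) * 2) r := by
      simpa using ((hasDerivAt_id' r).const_mul 2).sin
    have h2 : HasDerivAt (fun r : ℝ => t * Real.cos (2*r) + 2 * Real.sin (2*r))
        (t * (-Real.sin (2*r) * 2) + 2 * (Real.cos (2*r) * 2)) r := ((hc.const_mul t).add (hs.const_mul 2))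
    have hD : HasDerivAt F
        ((t * Real.exp (t*r)) / (2*t)
          - ((t * Real.exp (t*r)) * (t * Real.cos (2*r) + 2 * Real.sin (2*r))
             + Real.exp (t*r) * (t * (-Real.sin (2*r) * 2) + 2 * (Real.cos (2*r) * 2))) / (2*(t^2+4))) r :=
      (he.div_const (2*t)).sub ((he.mul h2).div_const (2*(t^2+4)))
    convert hD using 1
    have hcos2 : Real.cos (2*r) = 1 - 2 * Real.sin r ^ 2 := by
      rw [Real.cos_two_mul, ← Real.sin_sq_add_cos_sq r]; ring
    rw [hcos2]
    have h4 : t^2 + 4 ≠ 0 := by positivity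
    field_simp
    ring
  rw [intervalIntegral.integral_eq_sub_of_hasDerivAt hd ?_]
  apply Continuous.intervalIntegrable
  fun_prop

lemma integral_exp_sin_cos (t a b : ℝ) :
    (∫ r in a..b, Real.exp (t * r) * (Real.sin r * Real.cos r))
      = (Real.exp (t * b) * (t * Real.sin (2*b) - 2 * Real.cos (2*b)) / (2*(t^2+4))
        - Real.exp (t * a) * (t * Real.sin (2*a) - 2 * Real.cos (2*a)) / (2*(t^2+4))) := by
  set F : ℝ → ℝ := fun r => Real.exp (t * r) * (t * Real.sin (2*r) - 2 * Real.cos (2*r)) / (2*(t^2+4)) with hF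
  have hd : ∀ r ∈ Set.uIcc a b, HasDerivAt F (Real.exp (t * r) * (Real.sin r * Real.cos r)) r := by
    intro r _
    have he := hasDerivAt_exp_mul t r
    have hc : HasDerivAt (fun r : ℝ => Real.cos (2*r)) (-Real.sin (2*r) * 2) r := by
      simpa using ((hasDerivAt_id' r).const_mul 2).cos
    have hs : HasDerivAt (fun r : ℝ => Real.sin (2*r)) (Real.cos (2*r) * 2) r := by
      simpa using ((hasDerivAt_id' r).const_mul 2).sin
    have h2 : HasDerivAt (fun r : ℝ => t * Real.sin (2*r) - 2 * Real.cos (2*r))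
        (t * (Real.cos (2*r) * 2) - 2 * (-Real.sin (2*r) * 2)) r := ((hs.const_mul t).sub (hc.const_mul 2))
    have hD : HasDerivAt F
        (((t * Real.exp (t*r)) * (t * Real.sin (2*r) - 2 * Real.cos (2*r))
          + Real.exp (t*r) * (t * (Real.cos (2*r) * 2) - 2 * (-Real.sin (2*r) * 2))) / (2*(t^2+4))) r :=
      (he.mul h2).div_const (2*(t^2+4))
    convert hD using 1
    have hsin2 : Real.sin (2*r) = 2 * Real.sin r * Real.cos r := Real.sin_two_mul r
    rw [hsin2]
    have h4 : t^2 + 4 ≠ 0 := by positivity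
    field_simp
    ring
  rw [intervalIntegral.integral_eq_sub_of_hasDerivAt hd ?_]
  apply Continuous.intervalIntegrable
  fun_prop

theorem moment_egf_eq_mgf (n : ℕ) (hn : 3 ≤ n) (t : ℝ) (ht : t ≠ 0) :
    (Summable fun k : ℕ => momentI n k * t ^ k / (k.factorial : ℝ)) ∧
      (∑' k : ℕ, momentI n k * t ^ k / (k.factorial : ℝ)) =
        (2 * n / (Real.pi * (4 + t ^ 2))) *
          ( 2 * (Real.exp (t * Real.pi / n) - 1) / t
            + Real.tan (Real.pi / n) *
                (Real.exp (t * Real.pi / 2) - Real.exp (t * Real.pi / n)) ) := by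
  have hπ := Real.pi_pos
  have hn' : (3:ℝ) ≤ n := by exact_mod_cast hn
  have hnpos : (0:ℝ) < n := by linarith
  set φ : ℝ := π / n with hφdef
  have hφpos : 0 < φ := by positivity
  have hφlt : φ < π / 2 := by
    rw [hφdef, div_lt_div_iff₀ hnpos (by norm_num)]
    nlinarith
  have hcφ : 0 < Real.cos φ := Real.cos_pos_of_mem_Ioo ⟨by linarith, hφlt⟩
  have hA := hasSum_moment_integral t (a := 0) (b := φ)
    (by constructor <;> [linarith; linarith]) (by constructor <;> [linarith; linarith])
    (w := fun r => Real.sin r ^ 2) (by fun_prop)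
    (fun r => by rw [abs_of_nonneg (sq_nonneg _)]; exact Real.sin_sq_le_one r)
  have hB := hasSum_moment_integral t (a := φ) (b := π/2)
    (by constructor <;> [linarith; linarith]) (by constructor <;> [linarith; linarith])
    (w := fun r => Real.sin r * Real.cos r) (by fun_prop)
    (fun r => by
      rw [abs_mul]
      calc |Real.sin r| * |Real.cos r| ≤ 1 * 1 := by
            gcongr <;> [exact Real.abs_sin_le_one r; exact Real.abs_cos_le_one r]
        _ = 1 := by norm_num)
  set E1 : ℝ := ∫ r in (0:ℝ)..φ, Real.exp (t * r) * Real.sin r ^ 2 with hE1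
  set E2 : ℝ := ∫ r in φ..(π/2), Real.exp (t * r) * (Real.sin r * Real.cos r) with hE2
  have hsum : HasSum (fun k : ℕ => momentI n k * t ^ k / (k.factorial : ℝ))
      ((2 * n / π) * E1 + ((2 * n / π) * Real.tan φ) * E2) := by
    have h := (hA.mul_left (2 * n / π)).add (hB.mul_left ((2 * n / π) * Real.tan φ))
    have hfun : (fun k : ℕ => momentI n k * t ^ k / (k.factorial : ℝ))
        = fun k : ℕ => (2 * n / π) * ((∫ r in (0:ℝ)..φ, r ^ k * Real.sin r ^ 2) * t ^ k / (k.factorial : ℝ))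
          + ((2 * n / π) * Real.tan φ) * ((∫ r in φ..(π/2), r ^ k * (Real.sin r * Real.cos r)) * t ^ k / (k.factorial : ℝ)) := by
      funext k
      rw [momentI_eq n k hn]
      have : (∫ r in φ..(π/2), r ^ k * (Real.sin r * Real.cos r))
          = ∫ r in φ..(π/2), r ^ k * Real.sin r * Real.cos r := by
        apply intervalIntegral.integral_congr; intro x _; ring
      rw [this, ← hφdef]
      ring
    rw [hfun]
    exact h
  refine ⟨hsum.summable, ?_⟩
  rw [hsum.tsum_eq]
  rw [hE1, hE2, integral_exp_sin_sq t ht, integral_exp_sin_cos t]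
  -- simplify endpoint values
  rw [show t * (π/2) = t * π / 2 by ring, show (2:ℝ) * (π/2) = π by ring]
  rw [Real.sin_pi, Real.cos_pi]
  rw [show t * (0:ℝ) = 0 by ring, show (2:ℝ) * (0:ℝ) = 0 by ring]
  rw [Real.sin_zero, Real.cos_zero, Real.exp_zero]
  rw [show t * φ = t * π / n by rw [hφdef]; ring]
  rw [Real.tan_eq_sin_div_cos]
  rw [show (2:ℝ) * φ = 2 * φ from rfl]
  rw [Real.cos_two_mul, Real.sin_two_mul]
  have h1 : Real.sin φ ^ 2 + Real.cos φ ^ 2 = 1 := Real.sin_sq_add_cos_sq φ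
  have h4 : t^2 + 4 ≠ 0 := by positivity
  have h4' : (4:ℝ) + t^2 ≠ 0 := by positivity
  field_simp
  linear_combination (-Real.cos φ * Real.exp (π*t/n) * (8*t^2+2*t^4)) * h1
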